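/- For all x in (0, π/4), cos(x)² · cosh(x)³ > 1. -/
import Mathlib

lemma cosh_ge_one_add (x : ℝ) (hx : 0 ≤ x) : 1 + x ^ 2 / 2 ≤ Real.cosh x := by
  have h := Real.self_le_sinh_iff.2 (by positivity : (0:ℝ) ≤ x / 2)
  have h2 : Real.cosh x = 1 + 2 * Real.sinh (x / 2) ^ 2 := by
    have := Real.cosh_two_mul (x / 2)
    have hsq := Real.cosh_sq (x / 2)
    rw [show 2 * (x / 2) = x by ring] at this
    rw [this, hsq]; ring
  nlinarith [Real.sinh_nonneg_iff.2 (by positivity : (0:ℝ) ≤ x / 2)]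

theorem stmt_17 (x : ℝ) (hx : x ∈ Set.Ioo 0 (Real.pi / 4)) :
    Real.cos x ^ 2 * Real.cosh x ^ 3 > 1 := by
  obtain ⟨h0, h1⟩ := hx
  have hxu : x < 0.7875 := lt_of_lt_of_le h1 (by nlinarith [Real.pi_lt_d2])
  have hc : 1 - x ^ 2 / 2 < Real.cos x := Real.one_sub_sq_div_two_lt_cos (ne_of_gt h0)
  have hcp : (0:ℝ) < 1 - x ^ 2 / 2 := by nlinarith
  have hh : 1 + x ^ 2 / 2 ≤ Real.cosh x := cosh_ge_one_add x h0.le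
  have hhp : (0:ℝ) < 1 + x ^ 2 / 2 := by positivity
  have ht : x ^ 2 < 0.62016 := by nlinarith
  have key : (1 - x ^ 2 / 2) ^ 2 * (1 + x ^ 2 / 2) ^ 3 > 1 := by
    nlinarith [pow_pos h0 2, pow_pos h0 4, pow_pos h0 6, pow_pos h0 8, pow_pos h0 10, mul_pos (pow_pos h0 2) (sub_pos.2 ht), mul_pos (pow_pos h0 4) (sub_pos.2 ht), mul_pos (pow_pos h0 6) (sub_pos.2 ht)]
  calc (1:ℝ) < (1 - x ^ 2 / 2) ^ 2 * (1 + x ^ 2 / 2) ^ 3 := key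
    _ ≤ Real.cos x ^ 2 * Real.cosh x ^ 3 := by
        apply mul_le_mul
        · nlinarith
        · exact pow_le_pow_left₀ hhp.le hh 3
        · positivity
        · positivity
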